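/- Let n ≥ 2, let A be a real n×n singular irreducible M-matrix, and let L_G and U_G be the FSAI factors associated with the complete patterns S_L = {(i,j) : i ≥ j} \ {(n,n−1)} and S_U = {(i,j) : i ≤ j} \ {(n−1,n)}. With d_i = (L_G A U_G)_{ii} and D^− = diag(d_1^{−1}, …, d_{n−1}^{−1}, 0), the matrix Â = U_G D^− L_G is a (1,2)-inverse of A, that is, A Â A = A and Â A Â = Â. -/

import Mathlib

open Matrix

/-- The spectral radius of a real matrix: the maximum modulus of its complex
eigenvalues (supremum of moduli of elements of the complex spectrum). -/
noncomputable def specRad {n : ℕ} (B : Matrix (Fin n) (Fin n) ℝ) : ℝ :=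
  sSup ((fun z : ℂ => ‖z‖) '' spectrum ℂ (B.map Complex.ofReal))

/-- A real square matrix is a Z-matrix if its off-diagonal entries are nonpositive. -/
def IsZMatrix {n : ℕ} (A : Matrix (Fin n) (Fin n) ℝ) : Prop :=
  ∀ i j, i ≠ j → A i j ≤ 0

/-- A Z-matrix `A` is a nonsingular M-matrix if `A = s • 1 - B` with `B`
entrywise nonnegative and `s > ρ(B)`. -/
def IsNonsingularMMatrix {n : ℕ} (A : Matrix (Fin n) (Fin n) ℝ) : Prop :=
  IsZMatrix A ∧ ∃ (s : ℝ) (B : Matrix (Fin n) (Fin n) ℝ),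
    (∀ i j, 0 ≤ B i j) ∧ specRad B < s ∧ A = s • (1 : Matrix (Fin n) (Fin n) ℝ) - B

/-- A Z-matrix `A` is a singular M-matrix if `A = ρ(B) • 1 - B` with `B`
entrywise nonnegative. -/
def IsSingularMMatrix {n : ℕ} (A : Matrix (Fin n) (Fin n) ℝ) : Prop :=
  IsZMatrix A ∧ ∃ B : Matrix (Fin n) (Fin n) ℝ,
    (∀ i j, 0 ≤ B i j) ∧ A = specRad B • (1 : Matrix (Fin n) (Fin n) ℝ) - B

/-- A matrix is irreducible if its directed graph (edge `i → j` iff `A i j ≠ 0`)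
is strongly connected. -/
def IsIrreducibleMatrix {n : ℕ} (A : Matrix (Fin n) (Fin n) ℝ) : Prop :=
  ∀ i j : Fin n, Relation.ReflTransGen (fun a b : Fin n => A a b ≠ 0) i j

/-- Lower triangular real matrix. -/
def IsLowerTri {n : ℕ} (L : Matrix (Fin n) (Fin n) ℝ) : Prop :=
  ∀ i j : Fin n, i < j → L i j = 0

/-- Upper triangular real matrix. -/
def IsUpperTri {n : ℕ} (U : Matrix (Fin n) (Fin n) ℝ) : Prop :=
  ∀ i j : Fin n, j < i → U i j = 0

/-- `L` is an FSAI lower triangular factor of `A` for the pattern `S`: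
`L` is lower triangular, vanishes off the pattern, and `(L * A) i j = δ i j`
on the pattern. -/
def IsFSAILowerFactor {n : ℕ} (A L : Matrix (Fin n) (Fin n) ℝ)
    (S : Set (Fin n × Fin n)) : Prop :=
  IsLowerTri L ∧ (∀ p : Fin n × Fin n, p ∉ S → L p.1 p.2 = 0) ∧
    ∀ p : Fin n × Fin n, p ∈ S → (L * A) p.1 p.2 = if p.1 = p.2 then 1 else 0

/-- `U` is an FSAI upper triangular factor of `A` for the pattern `S`:
`U` is upper triangular, vanishes off the pattern, and `(A * U) i j = δ i j`
on the pattern. -/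
def IsFSAIUpperFactor {n : ℕ} (A U : Matrix (Fin n) (Fin n) ℝ)
    (S : Set (Fin n × Fin n)) : Prop :=
  IsUpperTri U ∧ (∀ p : Fin n × Fin n, p ∉ S → U p.1 p.2 = 0) ∧
    ∀ p : Fin n × Fin n, p ∈ S → (A * U) p.1 p.2 = if p.1 = p.2 then 1 else 0

open Polynomial

lemma my_eval_charpoly {m : ℕ} (C : Matrix (Fin m) (Fin m) ℂ) (z : ℂ) :
    C.charpoly.eval z = (z • (1 : Matrix (Fin m) (Fin m) ℂ) - C).det := by
  rw [Matrix.charpoly, ← Polynomial.coe_evalRingHom, RingHom.map_det]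
  congr 1
  ext i j
  by_cases h : i = j
  · subst h
    simp [Matrix.charmatrix_apply_eq, Matrix.one_apply, Matrix.smul_apply]
  · simp [Matrix.charmatrix_apply_ne _ _ _ h, Matrix.one_apply_ne h, Matrix.smul_apply]

lemma mem_spec_iff_det {m : ℕ} (C : Matrix (Fin m) (Fin m) ℂ) (z : ℂ) :
    z ∈ spectrum ℂ C ↔ (z • (1 : Matrix (Fin m) (Fin m) ℂ) - C).det = 0 := by
  rw [spectrum.mem_iff, Matrix.isUnit_iff_isUnit_det, isUnit_iff_ne_zero, not_not,
    Algebra.algebraMap_eq_smul_one]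

lemma mem_spec_iff_root {m : ℕ} (C : Matrix (Fin m) (Fin m) ℂ) (z : ℂ) :
    z ∈ spectrum ℂ C ↔ C.charpoly.IsRoot z := by
  rw [mem_spec_iff_det, Polynomial.IsRoot.def, my_eval_charpoly]

lemma spec_finite {m : ℕ} (C : Matrix (Fin m) (Fin m) ℂ) : (spectrum ℂ C).Finite := by
  apply Set.Finite.subset (C.charpoly.roots.toFinset : Finset ℂ).finite_toSet
  intro z hz
  simp only [Finset.mem_coe, Multiset.mem_toFinset, Polynomial.mem_roots']
  exact ⟨C.charpoly_monic.ne_zero, (mem_spec_iff_root C z).mp hz⟩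

lemma spec_nonempty {m : ℕ} (hm : 0 < m) (C : Matrix (Fin m) (Fin m) ℂ) :
    (spectrum ℂ C).Nonempty := by
  have hdeg : 0 < C.charpoly.degree := by
    rw [Matrix.charpoly_degree_eq_dim, Fintype.card_fin]
    exact_mod_cast hm
  obtain ⟨z, hz⟩ := Complex.exists_root hdeg
  exact ⟨z, (mem_spec_iff_root C z).mpr hz⟩

lemma abs_le_specRad {m : ℕ} (B : Matrix (Fin m) (Fin m) ℝ) {z : ℂ}
    (hz : z ∈ spectrum ℂ (B.map Complex.ofReal)) : ‖z‖ ≤ specRad B :=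
  le_csSup ((spec_finite _).image _).bddAbove ⟨z, hz, rfl⟩

lemma exists_specRad_eq {m : ℕ} (hm : 0 < m) (B : Matrix (Fin m) (Fin m) ℝ) :
    ∃ z ∈ spectrum ℂ (B.map Complex.ofReal), ‖z‖ = specRad B := by
  have h : sSup ((fun z : ℂ => ‖z‖) '' spectrum ℂ (B.map Complex.ofReal)) ∈ _ :=
    Set.Nonempty.csSup_mem ((spec_nonempty hm _).image _) ((spec_finite _).image _)
  obtain ⟨z, hz, hz2⟩ := h
  exact ⟨z, hz, hz2⟩

lemma specRad_nonneg {m : ℕ} (hm : 0 < m) (B : Matrix (Fin m) (Fin m) ℝ) :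
    0 ≤ specRad B := by
  obtain ⟨z, hz, hz2⟩ := exists_specRad_eq hm B
  rw [← hz2]; exact norm_nonneg _

lemma exists_eigenvector {m : ℕ} {C : Matrix (Fin m) (Fin m) ℂ} {z : ℂ}
    (hz : z ∈ spectrum ℂ C) : ∃ v, v ≠ 0 ∧ C *ᵥ v = z • v := by
  rw [mem_spec_iff_det] at hz
  obtain ⟨v, hv, hvz⟩ := (Matrix.exists_mulVec_eq_zero_iff).mpr hz
  refine ⟨v, hv, ?_⟩
  rw [Matrix.sub_mulVec, sub_eq_zero] at hvz
  rw [← hvz, Matrix.smul_mulVec, Matrix.one_mulVec]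

section PF
variable {m : ℕ}

lemma pow_entry_nonneg {B : Matrix (Fin m) (Fin m) ℝ} (hB : ∀ i j, 0 ≤ B i j) :
    ∀ (k : ℕ) (i j : Fin m), 0 ≤ (B ^ k) i j := by
  intro k
  induction k with
  | zero => intro i j; by_cases h : i = j <;> simp [h, Matrix.one_apply]
  | succ k ih =>
    intro i j
    rw [pow_succ, Matrix.mul_apply]
    exact Finset.sum_nonneg fun l _ => mul_nonneg (ih i l) (hB l j)

lemma pow_entry_add_ge {B : Matrix (Fin m) (Fin m) ℝ} (hB : ∀ i j, 0 ≤ B i j)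
    (a b : ℕ) (i j k : Fin m) : (B ^ a) i j * (B ^ b) j k ≤ (B ^ (a + b)) i k := by
  rw [pow_add, Matrix.mul_apply]
  exact Finset.single_le_sum (f := fun l => (B ^ a) i l * (B ^ b) l k)
    (fun l _ => mul_nonneg (pow_entry_nonneg hB a i l) (pow_entry_nonneg hB b l k))
    (Finset.mem_univ j)

/-- From strong connectivity of the graph of `A = r•1 - B`, positive entries of powers of `B`. -/
lemma exists_pow_pos {B : Matrix (Fin m) (Fin m) ℝ} (hB : ∀ i j, 0 ≤ B i j)
    {r : ℝ} (hirr : ∀ i j : Fin m,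
      Relation.ReflTransGen (fun a b : Fin m =>
        (r • (1 : Matrix (Fin m) (Fin m) ℝ) - B) a b ≠ 0) i j) :
    ∀ i j : Fin m, ∃ ℓ : ℕ, 0 < (B ^ ℓ) i j := by
  intro i j
  induction hirr i j with
  | refl => exact ⟨0, by simp⟩
  | @tail b c hib hrel ih =>
    obtain ⟨ℓ, hℓ⟩ := ih
    by_cases hbc : b = c
    · exact ⟨ℓ, hbc ▸ hℓ⟩
    · have hBbc : 0 < B b c := by
        have : (r • (1 : Matrix (Fin m) (Fin m) ℝ) - B) b c = -B b c := by
          simp [Matrix.sub_apply, Matrix.smul_apply, Matrix.one_apply_ne hbc]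
        rw [this, neg_ne_zero] at hrel
        exact lt_of_le_of_ne (hB b c) (Ne.symm hrel)
      refine ⟨ℓ + 1, ?_⟩
      calc (0:ℝ) < (B ^ ℓ) i b * B b c := mul_pos hℓ hBbc
      _ = (B ^ ℓ) i b * (B ^ 1) b c := by rw [pow_one]
      _ ≤ (B ^ (ℓ + 1)) i c := pow_entry_add_ge hB ℓ 1 i b c

lemma trace_pow_le (hm : 0 < m) (B : Matrix (Fin m) (Fin m) ℝ) {M : ℕ} (hM : 0 < M) :
    (B ^ M).trace ≤ (m : ℝ) * specRad B ^ M := by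
  set C := B.map Complex.ofReal with hC
  have hCpow : C ^ M = (B ^ M).map Complex.ofReal := by
    have : C = Complex.ofRealHom.mapMatrix B := rfl
    rw [this, ← map_pow]; rfl
  have htr : (C ^ M).trace = Complex.ofReal ((B ^ M).trace) := by
    rw [hCpow]
    simp [Matrix.trace, Matrix.diag, Matrix.map_apply]
  -- bound each root of the charpoly of C^M
  have hroot : ∀ μ ∈ (C ^ M).charpoly.roots, ‖μ‖ ≤ specRad B ^ M := by
    intro μ hμ
    have hμspec : μ ∈ spectrum ℂ (C ^ M) :=
      (mem_spec_iff_root _ μ).mpr (Polynomial.isRoot_of_mem_roots hμ)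
    have hmap : spectrum ℂ (C ^ M) = (fun z => Polynomial.eval z (Polynomial.X ^ M : ℂ[X]))
        '' spectrum ℂ C := by
      have := spectrum.map_polynomial_aeval_of_degree_pos C (Polynomial.X ^ M : ℂ[X])
        (by rw [Polynomial.degree_X_pow]; exact_mod_cast hM)
      simpa using this
    rw [hmap] at hμspec
    obtain ⟨lam, hlam, rfl⟩ := hμspec
    simp only [Polynomial.eval_pow, Polynomial.eval_X, norm_pow]
    exact pow_le_pow_left₀ (norm_nonneg _) (abs_le_specRad B hlam) M
  have hcard : (C ^ M).charpoly.roots.card ≤ m := by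
    have := Polynomial.card_roots' (C ^ M).charpoly
    rwa [Matrix.charpoly_natDegree_eq_dim, Fintype.card_fin] at this
  have habs : ‖(C ^ M).trace‖ ≤ (m : ℝ) * specRad B ^ M := by
    rw [Matrix.trace_eq_sum_roots_charpoly]
    calc ‖(C ^ M).charpoly.roots.sum‖
        ≤ ((C ^ M).charpoly.roots.map (fun z => ‖z‖)).sum := by
          simpa using norm_multiset_sum_le ((C ^ M).charpoly.roots)
      _ ≤ ((C ^ M).charpoly.roots.map (fun z => ‖z‖)).card • (specRad B ^ M) := by
          apply Multiset.sum_le_card_nsmul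
          intro x hx
          obtain ⟨μ, hμ, rfl⟩ := Multiset.mem_map.mp hx
          exact hroot μ hμ
      _ ≤ (m : ℝ) * specRad B ^ M := by
          rw [Multiset.card_map, nsmul_eq_mul]
          apply mul_le_mul_of_nonneg_right _
            (pow_nonneg (specRad_nonneg hm B) M)
          exact_mod_cast hcard
  calc (B ^ M).trace ≤ |(B ^ M).trace| := le_abs_self _
    _ = ‖(C ^ M).trace‖ := by rw [htr, Complex.norm_real, Real.norm_eq_abs]
    _ ≤ _ := habs

end PF

section PF2
variable {m : ℕ}

lemma GLC (hm : 0 < m) {B : Matrix (Fin m) (Fin m) ℝ} (hB : ∀ i j, 0 ≤ B i j)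
    (hpath : ∀ i j : Fin m, ∃ ℓ, 0 < (B ^ ℓ) i j)
    {w : Fin m → ℝ} (hw : ∀ i, 0 < w i) {c : ℝ} (hc : specRad B < c)
    (hcw : ∀ i, c * w i ≤ (B *ᵥ w) i) : False := by
  haveI : Nonempty (Fin m) := ⟨⟨0, hm⟩⟩
  set r := specRad B with hr
  have hr0 : 0 ≤ r := specRad_nonneg hm B
  have hc0 : 0 < c := lt_of_le_of_lt hr0 hc
  have h1 : ∀ (M : ℕ) (i : Fin m), c ^ M * w i ≤ ((B ^ M) *ᵥ w) i := by
    intro M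
    induction M with
    | zero => intro i; simp [Matrix.one_mulVec]
    | succ M ih =>
      intro i
      have e1 : (B ^ (M+1)) *ᵥ w = (B ^ M) *ᵥ (B *ᵥ w) := by
        rw [Matrix.mulVec_mulVec, ← pow_succ]
      rw [e1]
      calc c ^ (M+1) * w i = c * (c ^ M * w i) := by ring
        _ ≤ c * ((B ^ M) *ᵥ w) i := by
            exact mul_le_mul_of_nonneg_left (ih i) (le_of_lt hc0)
        _ = ∑ j, (B ^ M) i j * (c * w j) := by
            simp only [Matrix.mulVec, dotProduct, Finset.mul_sum]
            exact Finset.sum_congr rfl fun j _ => by ring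
        _ ≤ ∑ j, (B ^ M) i j * (B *ᵥ w) j := by
            apply Finset.sum_le_sum
            intro j _
            exact mul_le_mul_of_nonneg_left (hcw j) (pow_entry_nonneg hB M i j)
        _ = (B ^ M *ᵥ (B *ᵥ w)) i := by simp [Matrix.mulVec, dotProduct]
  set i₀ : Fin m := ⟨0, hm⟩
  set W := Finset.univ.sup' Finset.univ_nonempty w with hWdef
  have hW : ∀ j, w j ≤ W := fun j => Finset.le_sup' w (Finset.mem_univ j)
  have hWpos : 0 < W := lt_of_lt_of_le (hw i₀) (hW i₀)
  set pf : Fin m → ℕ := fun j => (hpath j i₀).choose with hpf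
  have hpfpos : ∀ j, 0 < (B ^ pf j) j i₀ := fun j => (hpath j i₀).choose_spec
  set P := Finset.univ.sup pf with hP
  have hPle : ∀ j, pf j ≤ P := fun j => Finset.le_sup (Finset.mem_univ j)
  set γ := Finset.univ.inf' Finset.univ_nonempty (fun j => (B ^ pf j) j i₀) with hγdef
  have hγ : 0 < γ := by
    rw [hγdef, Finset.lt_inf'_iff]
    intro j _; exact hpfpos j
  have hγle : ∀ j, γ ≤ (B ^ pf j) j i₀ :=
    fun j => Finset.inf'_le _ (Finset.mem_univ j)
  set β := w i₀ * γ / (m * W) with hβdef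
  have hβ : 0 < β := by
    apply div_pos (mul_pos (hw i₀) hγ)
    exact mul_pos (by exact_mod_cast hm) hWpos
  set K := (m : ℝ) * (max 1 r) ^ P with hKdef
  have hK : 0 < K :=
    mul_pos (by exact_mod_cast hm) (pow_pos (lt_of_lt_of_le one_pos (le_max_left _ _)) P)
  have key : ∀ M : ℕ, 0 < M → c ^ M * β ≤ K * r ^ M := by
    intro M hM
    -- find a large entry in row i₀ of B ^ M
    have hsum : c ^ M * w i₀ ≤ ∑ j, (B ^ M) i₀ j * w j := h1 M i₀
    have hex : ∃ j : Fin m, c ^ M * w i₀ / m ≤ (B ^ M) i₀ j * w j := by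
      by_contra hcon
      push_neg at hcon
      have hmne : (m : ℝ) ≠ 0 := by positivity
      have hlt : ∑ j, (B ^ M) i₀ j * w j < c ^ M * w i₀ := by
        calc ∑ j, (B ^ M) i₀ j * w j < ∑ _j : Fin m, c ^ M * w i₀ / m :=
              Finset.sum_lt_sum_of_nonempty Finset.univ_nonempty (fun j _ => hcon j)
          _ = m * (c ^ M * w i₀ / m) := by
              rw [Finset.sum_const, Finset.card_univ, Fintype.card_fin, nsmul_eq_mul]
          _ = c ^ M * w i₀ := by field_simp
      exact absurd hsum (not_le.mpr hlt)
    obtain ⟨j, hj⟩ := hex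
    set e := (B ^ M) i₀ j with hedef
    have he0 : 0 ≤ e := pow_entry_nonneg hB M i₀ j
    have hewj : c ^ M * w i₀ / (m * W) ≤ e / 1 := by
      rw [div_le_div_iff₀ (by positivity) one_pos]
      calc c ^ M * w i₀ * 1 = c ^ M * w i₀ := mul_one _
        _ ≤ (e * w j) * m := by
            have := (div_le_iff₀ (by positivity : (0:ℝ) < (m:ℝ))).mp hj
            linarith
        _ ≤ e * (m * W) := by
            nlinarith [mul_le_mul_of_nonneg_left (hW j) he0,
              (by exact_mod_cast hm : (0:ℝ) < (m:ℝ))]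
    rw [div_one] at hewj
    -- trace lower bound
    have htr1 : e * γ ≤ (B ^ (M + pf j)).trace := by
      calc e * γ ≤ e * (B ^ pf j) j i₀ := mul_le_mul_of_nonneg_left (hγle j) he0
        _ ≤ (B ^ (M + pf j)) i₀ i₀ := pow_entry_add_ge hB M (pf j) i₀ j i₀
        _ ≤ (B ^ (M + pf j)).trace := by
            apply Finset.single_le_sum (f := fun i => (B ^ (M + pf j)) i i)
              (fun i _ => pow_entry_nonneg hB _ i i) (Finset.mem_univ i₀)
    have htr2 : (B ^ (M + pf j)).trace ≤ K * r ^ M := by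
      calc (B ^ (M + pf j)).trace ≤ (m : ℝ) * r ^ (M + pf j) :=
            trace_pow_le hm B (by omega)
        _ = (m : ℝ) * (r ^ M * r ^ pf j) := by rw [pow_add]
        _ ≤ (m : ℝ) * (r ^ M * (max 1 r) ^ P) := by
            apply mul_le_mul_of_nonneg_left _ (by positivity)
            apply mul_le_mul_of_nonneg_left _ (pow_nonneg hr0 M)
            calc r ^ pf j ≤ (max 1 r) ^ pf j :=
                  pow_le_pow_left₀ hr0 (le_max_right 1 r) _
              _ ≤ (max 1 r) ^ P := pow_le_pow_right₀ (le_max_left 1 r) (hPle j)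
        _ = K * r ^ M := by rw [hKdef]; ring
    calc c ^ M * β = (c ^ M * w i₀ / (m * W)) * γ := by rw [hβdef]; ring
      _ ≤ e * γ := mul_le_mul_of_nonneg_right hewj (le_of_lt hγ)
      _ ≤ K * r ^ M := le_trans htr1 htr2
  -- derive the contradiction
  rcases eq_or_lt_of_le hr0 with hreq | hrpos
  · have := key 1 one_pos
    rw [← hreq] at this
    simp only [pow_one, mul_zero] at this
    nlinarith
  · obtain ⟨M, hM⟩ := pow_unbounded_of_one_lt (K / β) ((one_lt_div hrpos).mpr hc)
    have hM1 : K / β < (c / r) ^ (M + 1) := by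
      calc K / β < (c / r) ^ M := hM
        _ ≤ (c / r) ^ (M + 1) :=
          pow_le_pow_right₀ (le_of_lt ((one_lt_div hrpos).mpr hc)) (Nat.le_succ M)
    have h2 : K * r ^ (M + 1) < c ^ (M + 1) * β := by
      rw [div_pow, div_lt_div_iff₀ hβ (pow_pos hrpos _)] at hM1
      exact hM1
    exact absurd (key (M + 1) (Nat.succ_pos M)) (not_le.mpr h2)

end PF2

section KLsec
variable {m : ℕ}

lemma one_add_entry_nonneg {B : Matrix (Fin m) (Fin m) ℝ} (hB : ∀ i j, 0 ≤ B i j) :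
    ∀ i j, 0 ≤ (1 + B) i j := by
  intro i j
  rw [Matrix.add_apply]
  by_cases h : i = j
  · subst h
    have := hB i i
    simp [Matrix.one_apply]
    linarith
  · rw [Matrix.one_apply_ne h, zero_add]
    exact hB i j

lemma KL (hm : 0 < m) {B : Matrix (Fin m) (Fin m) ℝ} (hB : ∀ i j, 0 ≤ B i j)
    (hpath : ∀ i j : Fin m, ∃ ℓ, 0 < (B ^ ℓ) i j)
    {y : Fin m → ℝ} (hy0 : ∀ i, 0 ≤ y i) (hyne : y ≠ 0)
    (hyr : ∀ i, specRad B * y i ≤ (B *ᵥ y) i) :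
    B *ᵥ y = specRad B • y ∧ ∀ i, 0 < y i := by
  haveI : Nonempty (Fin m) := ⟨⟨0, hm⟩⟩
  set r := specRad B with hrdef
  have hr0 : 0 ≤ r := specRad_nonneg hm B
  obtain ⟨j₀, hj₀⟩ : ∃ j₀, 0 < y j₀ := by
    by_contra hcon
    push_neg at hcon
    exact hyne (funext fun i => le_antisymm (hcon i) (hy0 i))
  set N := Finset.univ.sup (fun p : Fin m × Fin m => (hpath p.1 p.2).choose) with hNdef
  set E := (1 + B) ^ N with hEdef
  have hE0 : ∀ i j, 0 ≤ E i j := fun i j => pow_entry_nonneg (one_add_entry_nonneg hB) N i j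
  have hentry : ∀ i j, E i j
      = ∑ k ∈ Finset.range (N + 1), (B ^ (N - k)) i j * (N.choose k : ℝ) := by
    intro i j
    rw [hEdef, (Commute.one_left B).add_pow, Matrix.sum_apply]
    apply Finset.sum_congr rfl
    intro k _
    rw [one_pow, one_mul, ← Matrix.diagonal_natCast, Matrix.mul_diagonal]
  have hEpos : ∀ i j, 0 < E i j := by
    intro i j
    have hle : (hpath i j).choose ≤ N :=
      Finset.le_sup (f := fun p : Fin m × Fin m => (hpath p.1 p.2).choose)
        (Finset.mem_univ (i, j))
    rw [hentry i j]
    apply Finset.sum_pos'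
    · intro k _
      exact mul_nonneg (pow_entry_nonneg hB _ i j) (Nat.cast_nonneg _)
    · refine ⟨N - (hpath i j).choose, Finset.mem_range.mpr (by omega), ?_⟩
      have h1 : N - (N - (hpath i j).choose) = (hpath i j).choose := by omega
      rw [h1]
      apply mul_pos (hpath i j).choose_spec
      exact_mod_cast Nat.choose_pos (Nat.sub_le N _)
  -- positivity of E *ᵥ x for a nonneg x with a positive coordinate
  have hEv : ∀ (x : Fin m → ℝ), (∀ i, 0 ≤ x i) → ∀ j₁, 0 < x j₁ → ∀ i, 0 < (E *ᵥ x) i := by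
    intro x hx j₁ hj₁ i
    rw [Matrix.mulVec, dotProduct]
    apply Finset.sum_pos'
    · intro k _; exact mul_nonneg (hE0 i k) (hx k)
    · exact ⟨j₁, Finset.mem_univ j₁, mul_pos (hEpos i j₁) hj₁⟩
  set w := E *ᵥ y with hwdef
  have hw : ∀ i, 0 < w i := hEv y hy0 j₀ hj₀
  have hcomm : B * E = E * B := (((Commute.one_right B).add_right (Commute.refl B)).pow_right N).eq
  by_cases hz : ∀ i, (B *ᵥ y) i = r * y i
  · have heq : B *ᵥ y = r • y := funext fun i => by rw [hz i]; rfl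
    refine ⟨heq, fun i => ?_⟩
    have hiter : ∀ k : ℕ, ((1 + B) ^ k) *ᵥ y = (1 + r) ^ k • y := by
      intro k
      induction k with
      | zero => simp [Matrix.one_mulVec]
      | succ k ih =>
        have : (1 + B) ^ (k + 1) = (1 + B) ^ k * (1 + B) := pow_succ _ _
        rw [this, ← Matrix.mulVec_mulVec]
        have hstep : (1 + B) *ᵥ y = (1 + r) • y := by
          rw [Matrix.add_mulVec, Matrix.one_mulVec, heq]
          funext i
          simp [Pi.smul_apply, smul_eq_mul]
          ring
        rw [hstep, Matrix.mulVec_smul, ih, pow_succ]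
        funext i
        simp [Pi.smul_apply, smul_eq_mul]
        ring
    have hwi : w i = (1 + r) ^ N * y i := by
      rw [hwdef, hEdef, hiter N]; rfl
    have hposN : (0:ℝ) < (1 + r) ^ N := pow_pos (by linarith) N
    have hwipos := hw i
    rw [hwi] at hwipos
    by_contra hyineg
    push_neg at hyineg
    nlinarith
  · push_neg at hz
    obtain ⟨i₁, hi₁⟩ := hz
    set z := fun i => (B *ᵥ y) i - r * y i with hzdef
    have hz0 : ∀ i, 0 ≤ z i := fun i => by simp [hzdef]; linarith [hyr i]
    have hzi₁ : 0 < z i₁ := by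
      simp [hzdef]
      have := hyr i₁
      rcases lt_or_eq_of_le this with h | h
      · linarith
      · exact absurd h.symm hi₁
    set v := E *ᵥ z with hvdef
    have hv : ∀ i, 0 < v i := hEv z hz0 i₁ hzi₁
    have hBw : ∀ i, (B *ᵥ w) i = r * w i + v i := by
      have h1 : B *ᵥ w = E *ᵥ (B *ᵥ y) := by
        rw [hwdef, Matrix.mulVec_mulVec, hcomm, ← Matrix.mulVec_mulVec]
      have h2 : B *ᵥ y = fun i => r * y i + z i := funext fun i => by simp [hzdef]
      intro i
      rw [h1, h2]
      have h3 : (fun i => r * y i + z i) = r • y + z := funext fun i => by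
        simp [Pi.smul_apply, smul_eq_mul]
      rw [h3, Matrix.mulVec_add, Matrix.mulVec_smul]
      simp [hvdef, hwdef, Pi.smul_apply, smul_eq_mul]
    set ε := Finset.univ.inf' Finset.univ_nonempty (fun i => v i / w i) with hεdef
    have hε : 0 < ε := by
      rw [hεdef, Finset.lt_inf'_iff]
      intro i _
      exact div_pos (hv i) (hw i)
    have hεi : ∀ i, ε * w i ≤ v i := by
      intro i
      have h := Finset.inf'_le (fun i => v i / w i) (Finset.mem_univ i)
      rw [← hεdef] at h
      calc ε * w i ≤ (v i / w i) * w i := mul_le_mul_of_nonneg_right h (le_of_lt (hw i))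
        _ = v i := div_mul_cancel₀ _ (ne_of_gt (hw i))
    exact (GLC hm hB hpath hw (c := r + ε) (lt_add_of_pos_right r hε)
      (fun i => by rw [hBw i]; nlinarith [hεi i])).elim
end KLsec

section Null
variable {m : ℕ}

lemma abs_eigen {k : ℕ} (hk : 0 < k) {B : Matrix (Fin k) (Fin k) ℝ}
    (hB : ∀ i j, 0 ≤ B i j) :
    ∃ y : Fin k → ℝ, (∀ i, 0 ≤ y i) ∧ y ≠ 0 ∧ ∀ i, specRad B * y i ≤ (B *ᵥ y) i := by
  obtain ⟨z, hz, hzabs⟩ := exists_specRad_eq hk B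
  obtain ⟨v, hv, hvec⟩ := exists_eigenvector hz
  refine ⟨fun i => ‖v i‖, fun i => norm_nonneg _, ?_, ?_⟩
  · intro hcon
    apply hv
    funext i
    have h := congrFun hcon i
    simpa using h
  · intro i
    have h1 : specRad B * ‖v i‖ = ‖z * v i‖ := by
      rw [norm_mul, hzabs]
    have h2 : z * v i = ((B.map Complex.ofReal) *ᵥ v) i := by
      rw [hvec]; simp
    rw [h1, h2]
    calc ‖∑ j, (B.map Complex.ofReal) i j * v j‖
        ≤ ∑ j, ‖(B.map Complex.ofReal) i j * v j‖ := by
          exact norm_sum_le _ _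
      _ = ∑ j, B i j * ‖v j‖ := by
          apply Finset.sum_congr rfl
          intro j _
          rw [Matrix.map_apply, norm_mul, Complex.norm_real, Real.norm_eq_abs, abs_of_nonneg (hB i j)]
      _ = (B *ᵥ (fun j => ‖v j‖)) i := rfl

lemma exists_null (hm : 0 < m) {B : Matrix (Fin m) (Fin m) ℝ} {r : ℝ}
    (hB : ∀ i j, 0 ≤ B i j) (hr : r = specRad B)
    (hirr : ∀ i j : Fin m, Relation.ReflTransGen
      (fun a b : Fin m => (r • (1 : Matrix (Fin m) (Fin m) ℝ) - B) a b ≠ 0) i j) :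
    ∃ y : Fin m → ℝ, y ≠ 0 ∧ (r • (1 : Matrix (Fin m) (Fin m) ℝ) - B) *ᵥ y = 0 := by
  subst hr
  have hpath := exists_pow_pos hB hirr
  obtain ⟨y, hy0, hyne, hyr⟩ := abs_eigen hm hB
  obtain ⟨heq, -⟩ := KL hm hB hpath hy0 hyne hyr
  refine ⟨y, hyne, ?_⟩
  rw [Matrix.sub_mulVec, Matrix.smul_mulVec, Matrix.one_mulVec, heq, sub_self]

lemma sum_of_lt {k n : ℕ} (h : k ≤ n) (g : Fin n → ℝ)
    (hg : ∀ j : Fin n, k ≤ (j : ℕ) → g j = 0) :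
    ∑ j, g j = ∑ q : Fin k, g (Fin.castLE h q) := by
  classical
  rw [show (∑ q : Fin k, g (Fin.castLE h q))
      = ∑ j ∈ Finset.univ.map (Fin.castLEEmb h), g j by
    rw [Finset.sum_map]; rfl]
  symm
  apply Finset.sum_subset (Finset.subset_univ _)
  intro j _ hjnot
  apply hg
  by_contra hlt
  push_neg at hlt
  refine hjnot (Finset.mem_map.mpr ⟨⟨(j : ℕ), hlt⟩, Finset.mem_univ _, ?_⟩)
  ext
  simp

lemma leading_invertible {k : ℕ} (hk : k < m) {B : Matrix (Fin m) (Fin m) ℝ} {r : ℝ}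
    (hB : ∀ i j, 0 ≤ B i j) (hr : r = specRad B)
    (hirr : ∀ i j : Fin m, Relation.ReflTransGen
      (fun a b : Fin m => (r • (1 : Matrix (Fin m) (Fin m) ℝ) - B) a b ≠ 0) i j) :
    ((r • (1 : Matrix (Fin m) (Fin m) ℝ) - B).submatrix (Fin.castLE hk.le)
      (Fin.castLE hk.le)).det ≠ 0 := by
  have hm : 0 < m := lt_of_le_of_lt (Nat.zero_le k) hk
  rcases Nat.eq_zero_or_pos k with rfl | hkpos
  · haveI : IsEmpty (Fin 0) := by infer_instance
    rw [Matrix.det_isEmpty]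
    exact one_ne_zero
  set f : Fin k → Fin m := Fin.castLE hk.le with hf
  set B' := B.submatrix f f with hB'
  have hB'0 : ∀ p q, 0 ≤ B' p q := fun p q => hB _ _
  have hsub : (r • (1 : Matrix (Fin m) (Fin m) ℝ) - B).submatrix f f
      = r • (1 : Matrix (Fin k) (Fin k) ℝ) - B' := by
    ext p q
    simp only [Matrix.submatrix_apply, Matrix.sub_apply, Matrix.smul_apply, hB']
    congr 1
    by_cases hpq : p = q
    · subst hpq; simp [Matrix.one_apply]
    · have : f p ≠ f q := fun hcon => hpq (by
        apply Fin.ext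
        have := congrArg (fun t : Fin m => (t : ℕ)) hcon
        simpa [hf] using this)
      rw [Matrix.one_apply_ne this, Matrix.one_apply_ne hpq]
  have hρ : specRad B' < r := by
    by_contra hcon
    push_neg at hcon
    obtain ⟨y', hy'0, hy'ne, hy'r⟩ := abs_eigen hkpos hB'0
    set yt : Fin m → ℝ := fun i => if h : (i : ℕ) < k then y' ⟨(i : ℕ), h⟩ else 0 with hyt
    have hyt0 : ∀ i, 0 ≤ yt i := by
      intro i
      by_cases h : (i : ℕ) < k <;> simp [hyt, h]
      exact hy'0 _
    have hytne : yt ≠ 0 := by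
      obtain ⟨q, hq⟩ := Function.ne_iff.mp hy'ne
      intro hcon2
      apply hq
      have := congrFun hcon2 (f q)
      have hfq : ((f q : Fin m) : ℕ) < k := by simp [hf]
      rw [hyt] at this
      exact (by simpa [dif_pos hfq] using this : y' ⟨_, hfq⟩ = 0)
    have hytr : ∀ i, specRad B * yt i ≤ (B *ᵥ yt) i := by
      intro i
      by_cases hi : (i : ℕ) < k
      · have hmv : (B *ᵥ yt) i = ∑ q : Fin k, B' ⟨(i : ℕ), hi⟩ q * y' q := by
          rw [Matrix.mulVec, dotProduct]
          rw [sum_of_lt hk.le (fun j => B i j * yt j)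
            (fun j hj => by simp [hyt, dif_neg (not_lt.mpr hj)])]
          apply Finset.sum_congr rfl
          intro q _
          have hfq : ((Fin.castLE hk.le q : Fin m) : ℕ) < k := by simp
          simp only [hyt, dif_pos hfq, hB', Matrix.submatrix_apply]
          congr 1
        have hyti : yt i = y' ⟨(i : ℕ), hi⟩ := by simp [hyt, dif_pos hi]
        rw [hmv, hyti, ← hr]
        calc r * y' ⟨(i : ℕ), hi⟩ ≤ specRad B' * y' ⟨(i : ℕ), hi⟩ :=
              mul_le_mul_of_nonneg_right hcon (hy'0 _)
          _ ≤ (B' *ᵥ y') ⟨(i : ℕ), hi⟩ := hy'r _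
          _ = ∑ q : Fin k, B' ⟨(i : ℕ), hi⟩ q * y' q := rfl
      · have hyti : yt i = 0 := by simp [hyt, dif_neg hi]
        rw [hyti, mul_zero]
        rw [Matrix.mulVec, dotProduct]
        exact Finset.sum_nonneg fun j _ => mul_nonneg (hB i j) (hyt0 j)
    have hytr' : ∀ i, specRad B * yt i ≤ (B *ᵥ yt) i := hytr
    obtain ⟨-, hpos⟩ := KL hm hB (exists_pow_pos hB hirr) hyt0 hytne hytr'
    have hzero : yt ⟨k, hk⟩ = 0 := by simp [hyt]
    have := hpos ⟨k, hk⟩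
    rw [hzero] at this
    exact lt_irrefl 0 this
  intro hdet
  rw [hsub] at hdet
  have hspec : ((r : ℂ)) ∈ spectrum ℂ (B'.map Complex.ofReal) := by
    rw [mem_spec_iff_det]
    have hmap : ((r : ℂ)) • (1 : Matrix (Fin k) (Fin k) ℂ) - B'.map Complex.ofReal
        = (r • (1 : Matrix (Fin k) (Fin k) ℝ) - B').map Complex.ofReal := by
      ext p q
      simp only [Matrix.map_apply, Matrix.sub_apply, Matrix.smul_apply]
      by_cases hpq : p = q
      · subst hpq; simp [Matrix.one_apply]
      · simp [Matrix.one_apply_ne hpq]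
    rw [hmap]
    have : ((r • (1 : Matrix (Fin k) (Fin k) ℝ) - B').map Complex.ofReal).det
        = Complex.ofRealHom ((r • (1 : Matrix (Fin k) (Fin k) ℝ) - B').det) :=
      (RingHom.map_det Complex.ofRealHom _).symm
    rw [this, hdet]
    simp
  have habs := abs_le_specRad B' hspec
  rw [Complex.norm_real, Real.norm_eq_abs, abs_of_nonneg (by rw [hr]; exact specRad_nonneg hm B)] at habs
  rw [hr] at hρ
  linarith
end Null

section Struct
variable {n : ℕ}

lemma Mstruct {A L U : Matrix (Fin n) (Fin n) ℝ} {i₁ i₂ : Fin n}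
    (h1 : (i₁ : ℕ) = n - 1) (h2 : (i₂ : ℕ) = n - 2) (hn : 2 ≤ n)
    (hLt : ∀ i j : Fin n, i < j → L i j = 0)
    (hUt : ∀ i j : Fin n, j < i → U i j = 0)
    (hLA : ∀ i j : Fin n, j ≤ i → ¬(i = i₁ ∧ j = i₂) →
      (L * A) i j = if i = j then (1:ℝ) else 0)
    (hAU : ∀ i j : Fin n, i ≤ j → ¬(i = i₂ ∧ j = i₁) →
      (A * U) i j = if i = j then (1:ℝ) else 0) :
    ∀ i j : Fin n, i ≠ j → ¬(i = i₁ ∧ j = i₂) → ¬(i = i₂ ∧ j = i₁) →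
      (L * A * U) i j = 0 := by
  intro i j hij hs1 hs2
  rcases lt_or_gt_of_ne hij with hlt | hgt
  · rw [mul_assoc, Matrix.mul_apply]
    apply Finset.sum_eq_zero
    intro t _
    by_cases hti : i < t
    · rw [hLt i t hti, zero_mul]
    · push_neg at hti
      have htj : t < j := lt_of_le_of_lt hti hlt
      have hAU0 : (A * U) t j = 0 := by
        have hns : ¬(t = i₂ ∧ j = i₁) := by
          rintro ⟨ht, hj⟩
          apply hs2
          refine ⟨?_, hj⟩
          apply Fin.ext
          have e1 : (t : ℕ) ≤ (i : ℕ) := hti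
          have e2 : (i : ℕ) < (j : ℕ) := hlt
          have e3 : (t : ℕ) = n - 2 := by rw [ht]; exact h2
          have e4 : (j : ℕ) = n - 1 := by rw [hj]; exact h1
          omega
        rw [hAU t j (le_of_lt htj) hns, if_neg (ne_of_lt htj)]
      rw [hAU0, mul_zero]
  · rw [Matrix.mul_apply]
    apply Finset.sum_eq_zero
    intro t _
    by_cases hjt : j < t
    · rw [hUt t j hjt, mul_zero]
    · push_neg at hjt
      have hti : t < i := lt_of_le_of_lt hjt hgt
      have hLA0 : (L * A) i t = 0 := by
        have hns : ¬(i = i₁ ∧ t = i₂) := by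
          rintro ⟨hi, ht⟩
          apply hs1
          refine ⟨hi, ?_⟩
          apply Fin.ext
          have e1 : (t : ℕ) ≤ (j : ℕ) := hjt
          have e2 : (j : ℕ) < (i : ℕ) := hgt
          have e3 : (t : ℕ) = n - 2 := by rw [ht]; exact h2
          have e4 : (i : ℕ) = n - 1 := by rw [hi]; exact h1
          omega
        rw [hLA i t (le_of_lt hti) hns, if_neg (ne_of_gt hti)]
      rw [hLA0, zero_mul]

lemma submatrix_mul_lower {k : ℕ} (hkn : k ≤ n) {L X : Matrix (Fin n) (Fin n) ℝ}
    (hLt : ∀ i j : Fin n, i < j → L i j = 0) :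
    (L * X).submatrix (Fin.castLE hkn) (Fin.castLE hkn)
      = L.submatrix (Fin.castLE hkn) (Fin.castLE hkn)
        * X.submatrix (Fin.castLE hkn) (Fin.castLE hkn) := by
  ext p q
  rw [Matrix.submatrix_apply, Matrix.mul_apply, Matrix.mul_apply]
  rw [sum_of_lt hkn (fun t => L (Fin.castLE hkn p) t * X t (Fin.castLE hkn q))
    (fun t ht => by
      show L (Fin.castLE hkn p) t * X t (Fin.castLE hkn q) = 0
      rw [hLt (Fin.castLE hkn p) t (by
        rw [Fin.lt_def]
        have : ((Fin.castLE hkn p : Fin n) : ℕ) < k := p.isLt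
        omega), zero_mul])]
  rfl

lemma submatrix_mul_upper {k : ℕ} (hkn : k ≤ n) {X U : Matrix (Fin n) (Fin n) ℝ}
    (hUt : ∀ i j : Fin n, j < i → U i j = 0) :
    (X * U).submatrix (Fin.castLE hkn) (Fin.castLE hkn)
      = X.submatrix (Fin.castLE hkn) (Fin.castLE hkn)
        * U.submatrix (Fin.castLE hkn) (Fin.castLE hkn) := by
  ext p q
  rw [Matrix.submatrix_apply, Matrix.mul_apply, Matrix.mul_apply]
  rw [sum_of_lt hkn (fun t => X (Fin.castLE hkn p) t * U t (Fin.castLE hkn q))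
    (fun t ht => by
      show X (Fin.castLE hkn p) t * U t (Fin.castLE hkn q) = 0
      rw [hUt t (Fin.castLE hkn q) (by
        rw [Fin.lt_def]
        have : ((Fin.castLE hkn q : Fin n) : ℕ) < k := q.isLt
        omega), mul_zero])]
  rfl

end Struct

section Diag
variable {n : ℕ}

lemma Ldiag {A L : Matrix (Fin n) (Fin n) ℝ} {i₁ i₂ : Fin n}
    (h1 : (i₁ : ℕ) = n - 1) (h2 : (i₂ : ℕ) = n - 2) (hn : 2 ≤ n)
    (hmin : ∀ (k : ℕ) (hk : k < n),
      (A.submatrix (Fin.castLE hk.le) (Fin.castLE hk.le)).det ≠ 0)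
    (hLt : ∀ i j : Fin n, i < j → L i j = 0) (hLoff : L i₁ i₂ = 0)
    (hLA : ∀ i j : Fin n, j ≤ i → ¬(i = i₁ ∧ j = i₂) →
      (L * A) i j = if i = j then (1:ℝ) else 0) :
    ∀ i : Fin n, L i i ≠ 0 := by
  intro i hLii
  have hin : (i : ℕ) < n := i.isLt
  set k : ℕ := if i = i₁ then n - 2 else (i : ℕ) with hkdef
  have hk : k < n := by rw [hkdef]; split_ifs <;> omega
  have hkle : k ≤ (i : ℕ) := by
    rw [hkdef]; split_ifs with h
    · rw [h, h1]; omega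
    · exact le_refl _
  have hzero : ∀ t : Fin n, k ≤ (t : ℕ) → L i t = 0 := by
    intro t ht
    by_cases hii : i = i₁
    · rw [hkdef, if_pos hii] at ht
      have htn : (t : ℕ) < n := t.isLt
      rcases Nat.lt_or_ge (t : ℕ) (n - 1) with hlt | hge
      · have : t = i₂ := Fin.ext (by omega)
        rw [this, hii]; exact hLoff
      · have : t = i₁ := Fin.ext (by omega)
        rw [this, ← hii]; exact hLii
    · rw [hkdef, if_neg hii] at ht
      rcases eq_or_lt_of_le ht with heq | hlt
      · have : t = i := Fin.ext heq.symm
        rw [this]; exact hLii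
      · exact hLt i t (by rw [Fin.lt_def]; exact hlt)
  have hkn : k ≤ n := le_of_lt hk
  set f : Fin k → Fin n := Fin.castLE hkn with hf
  have hfle : ∀ q : Fin k, f q ≤ i := fun q => by
    rw [Fin.le_def]
    have : ((f q : Fin n) : ℕ) < k := q.isLt
    omega
  have hfne : ∀ q : Fin k, f q ≠ i := fun q hcon => by
    have : ((f q : Fin n) : ℕ) < k := q.isLt
    rw [hcon] at this
    omega
  have hLA0 : ∀ q : Fin k, (L * A) i (f q) = 0 := by
    intro q
    have hns : ¬(i = i₁ ∧ f q = i₂) := by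
      rintro ⟨hi, hq⟩
      have hq1 : ((f q : Fin n) : ℕ) < k := q.isLt
      rw [hq, h2, hkdef, if_pos hi] at hq1
      omega
    rw [hLA i (f q) (hfle q) hns, if_neg (fun hcon => hfne q hcon.symm)]
  set vv : Fin k → ℝ := fun q => L i (f q) with hvv
  have hvA : vv ᵥ* (A.submatrix f f) = 0 := by
    funext j
    show ∑ q, vv q * (A.submatrix f f) q j = 0
    have hsum := sum_of_lt hkn (fun t => L i t * A t (f j))
      (fun t ht => by
        show L i t * A t (f j) = 0
        rw [hzero t ht, zero_mul])
    calc ∑ q, vv q * (A.submatrix f f) q j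
        = ∑ t, L i t * A t (f j) := by rw [hsum]; rfl
      _ = (L * A) i (f j) := (Matrix.mul_apply).symm
      _ = 0 := hLA0 j
  have hvv0 : vv = 0 := Matrix.eq_zero_of_vecMul_eq_zero (hmin k hk) hvA
  have hone : (L * A) i i = 1 := by
    rw [hLA i i (le_refl i) (by
      rintro ⟨hi1, hi2⟩
      rw [hi1] at hi2
      have : (n : ℕ) - 1 = n - 2 := by rw [← h1, ← h2, hi2]
      omega), if_pos rfl]
  have hzero2 : (L * A) i i = 0 := by
    rw [Matrix.mul_apply]
    rw [sum_of_lt hkn (fun t => L i t * A t i)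
      (fun t ht => by show L i t * A t i = 0; rw [hzero t ht, zero_mul])]
    apply Finset.sum_eq_zero
    intro q _
    show L i (f q) * A (f q) i = 0
    have : vv q = 0 := by rw [hvv0]; rfl
    rw [show L i (f q) = vv q from rfl, this, zero_mul]
  rw [hone] at hzero2
  exact one_ne_zero hzero2

lemma Udiag {A U : Matrix (Fin n) (Fin n) ℝ} {i₁ i₂ : Fin n}
    (h1 : (i₁ : ℕ) = n - 1) (h2 : (i₂ : ℕ) = n - 2) (hn : 2 ≤ n)
    (hmin : ∀ (k : ℕ) (hk : k < n),
      (A.submatrix (Fin.castLE hk.le) (Fin.castLE hk.le)).det ≠ 0)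
    (hUt : ∀ i j : Fin n, j < i → U i j = 0) (hUoff : U i₂ i₁ = 0)
    (hAU : ∀ i j : Fin n, i ≤ j → ¬(i = i₂ ∧ j = i₁) →
      (A * U) i j = if i = j then (1:ℝ) else 0) :
    ∀ j : Fin n, U j j ≠ 0 := by
  intro j hUjj
  have hjn : (j : ℕ) < n := j.isLt
  set k : ℕ := if j = i₁ then n - 2 else (j : ℕ) with hkdef
  have hk : k < n := by rw [hkdef]; split_ifs <;> omega
  have hkle : k ≤ (j : ℕ) := by
    rw [hkdef]; split_ifs with h
    · rw [h, h1]; omega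
    · exact le_refl _
  have hzero : ∀ t : Fin n, k ≤ (t : ℕ) → U t j = 0 := by
    intro t ht
    by_cases hjj : j = i₁
    · rw [hkdef, if_pos hjj] at ht
      have htn : (t : ℕ) < n := t.isLt
      rcases Nat.lt_or_ge (t : ℕ) (n - 1) with hlt | hge
      · have : t = i₂ := Fin.ext (by omega)
        rw [this, hjj]; exact hUoff
      · have : t = i₁ := Fin.ext (by omega)
        rw [this, ← hjj]; exact hUjj
    · rw [hkdef, if_neg hjj] at ht
      rcases eq_or_lt_of_le ht with heq | hlt
      · have : t = j := Fin.ext heq.symm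
        rw [this]; exact hUjj
      · exact hUt t j (by rw [Fin.lt_def]; exact hlt)
  have hkn : k ≤ n := le_of_lt hk
  set f : Fin k → Fin n := Fin.castLE hkn with hf
  have hfle : ∀ q : Fin k, f q ≤ j := fun q => by
    rw [Fin.le_def]
    have : ((f q : Fin n) : ℕ) < k := q.isLt
    omega
  have hfne : ∀ q : Fin k, f q ≠ j := fun q hcon => by
    have : ((f q : Fin n) : ℕ) < k := q.isLt
    rw [hcon] at this
    omega
  have hAU0 : ∀ q : Fin k, (A * U) (f q) j = 0 := by
    intro q
    have hns : ¬(f q = i₂ ∧ j = i₁) := by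
      rintro ⟨hq, hj⟩
      have hq1 : ((f q : Fin n) : ℕ) < k := q.isLt
      rw [hq, h2, hkdef, if_pos hj] at hq1
      omega
    rw [hAU (f q) j (hfle q) hns, if_neg (hfne q)]
  set uu : Fin k → ℝ := fun q => U (f q) j with huu
  have hAu : (A.submatrix f f) *ᵥ uu = 0 := by
    funext p
    show ∑ q, (A.submatrix f f) p q * uu q = 0
    have hsum := sum_of_lt hkn (fun t => A (f p) t * U t j)
      (fun t ht => by
        show A (f p) t * U t j = 0
        rw [hzero t ht, mul_zero])
    calc ∑ q, (A.submatrix f f) p q * uu q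
        = ∑ t, A (f p) t * U t j := by rw [hsum]; rfl
      _ = (A * U) (f p) j := (Matrix.mul_apply).symm
      _ = 0 := hAU0 p
  have huu0 : uu = 0 := Matrix.eq_zero_of_mulVec_eq_zero (hmin k hk) hAu
  have hone : (A * U) j j = 1 := by
    rw [hAU j j (le_refl j) (by
      rintro ⟨hj1, hj2⟩
      rw [hj2] at hj1
      have : (n : ℕ) - 1 = n - 2 := by rw [← h1, ← h2, hj1]
      omega), if_pos rfl]
  have hzero2 : (A * U) j j = 0 := by
    rw [Matrix.mul_apply]
    rw [sum_of_lt hkn (fun t => A j t * U t j)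
      (fun t ht => by show A j t * U t j = 0; rw [hzero t ht, mul_zero])]
    apply Finset.sum_eq_zero
    intro q _
    show A j (f q) * U (f q) j = 0
    have : uu q = 0 := by rw [huu0]; rfl
    rw [show U (f q) j = uu q from rfl, this, mul_zero]
  rw [hone] at hzero2
  exact one_ne_zero hzero2

end Diag

section D1
variable {n : ℕ}

lemma Mdiag_ne {A L U : Matrix (Fin n) (Fin n) ℝ} {i₁ i₂ : Fin n}
    (h1 : (i₁ : ℕ) = n - 1) (h2 : (i₂ : ℕ) = n - 2) (hn : 2 ≤ n)
    (hmin : ∀ (k : ℕ) (hk : k < n),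
      (A.submatrix (Fin.castLE hk.le) (Fin.castLE hk.le)).det ≠ 0)
    (hLt : ∀ i j : Fin n, i < j → L i j = 0)
    (hUt : ∀ i j : Fin n, j < i → U i j = 0)
    (hLd : ∀ i : Fin n, L i i ≠ 0) (hUd : ∀ i : Fin n, U i i ≠ 0)
    (hMoff : ∀ i j : Fin n, i ≠ j → ¬(i = i₁ ∧ j = i₂) → ¬(i = i₂ ∧ j = i₁) →
      (L * A * U) i j = 0) :
    ∀ i : Fin n, i ≠ i₁ → (L * A * U) i i ≠ 0 := by
  intro i hii₁
  have hin : (i : ℕ) < n := i.isLt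
  have hine : (i : ℕ) ≠ n - 1 := fun h => hii₁ (Fin.ext (by rw [h, h1]))
  set k : ℕ := (i : ℕ) + 1 with hkdef
  have hk : k < n := by omega
  have hkn : k ≤ n := le_of_lt hk
  set f : Fin k → Fin n := Fin.castLE hkn with hf
  have hfval : ∀ p : Fin k, ((f p : Fin n) : ℕ) < k := fun p => p.isLt
  have hfne1 : ∀ p : Fin k, f p ≠ i₁ := by
    intro p hcon
    have := hfval p
    rw [hcon, h1] at this
    omega
  have hM' : (L * A * U).submatrix f f
      = (L.submatrix f f) * (A.submatrix f f) * (U.submatrix f f) := by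
    rw [submatrix_mul_upper hkn hUt, submatrix_mul_lower hkn hLt]
  have hdiagM : (L * A * U).submatrix f f
      = Matrix.diagonal (fun p => (L * A * U) (f p) (f p)) := by
    ext p q
    by_cases hpq : p = q
    · subst hpq
      rw [Matrix.diagonal_apply_eq, Matrix.submatrix_apply]
    · rw [Matrix.diagonal_apply_ne _ hpq, Matrix.submatrix_apply]
      apply hMoff
      · intro hcon
        apply hpq
        apply Fin.ext
        have := congrArg (fun t : Fin n => (t : ℕ)) hcon
        simpa [hf] using this
      · rintro ⟨hcon, -⟩; exact hfne1 p hcon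
      · rintro ⟨-, hcon⟩; exact hfne1 q hcon
  have hdetL : (L.submatrix f f).det ≠ 0 := by
    rw [Matrix.det_of_lowerTriangular _ (by
      intro a b hab
      rw [Matrix.submatrix_apply]
      apply hLt
      rw [Fin.lt_def]
      exact hab)]
    rw [Finset.prod_ne_zero_iff]
    exact fun p _ => hLd (f p)
  have hdetU : (U.submatrix f f).det ≠ 0 := by
    rw [Matrix.det_of_upperTriangular (by
      intro a b hab
      rw [Matrix.submatrix_apply]
      apply hUt
      rw [Fin.lt_def]
      exact hab)]
    rw [Finset.prod_ne_zero_iff]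
    exact fun p _ => hUd (f p)
  have hdet : (∏ p : Fin k, (L * A * U) (f p) (f p)) ≠ 0 := by
    rw [← Matrix.det_diagonal, ← hdiagM, hM', Matrix.det_mul, Matrix.det_mul]
    exact mul_ne_zero (mul_ne_zero hdetL (hmin k hk)) hdetU
  have := Finset.prod_ne_zero_iff.mp hdet ⟨(i : ℕ), by omega⟩ (Finset.mem_univ _)
  have hfp : f ⟨(i : ℕ), by omega⟩ = i := Fin.ext rfl
  rwa [hfp] at this

end D1

section Claims
variable {n : ℕ}

lemma claim2 {M : Matrix (Fin n) (Fin n) ℝ} {i₁ i₂ : Fin n}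
    (hMoff : ∀ i j : Fin n, i ≠ j → ¬(i = i₁ ∧ j = i₂) → ¬(i = i₂ ∧ j = i₁) → M i j = 0) :
    Matrix.diagonal (fun i => if i = i₁ then (0:ℝ) else (M i i)⁻¹) * M *
      Matrix.diagonal (fun i => if i = i₁ then (0:ℝ) else (M i i)⁻¹)
    = Matrix.diagonal (fun i => if i = i₁ then (0:ℝ) else (M i i)⁻¹) := by
  set d : Fin n → ℝ := fun i => if i = i₁ then (0:ℝ) else (M i i)⁻¹ with hd
  ext i j
  rw [Matrix.mul_diagonal, Matrix.diagonal_mul]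
  by_cases hij : i = j
  · subst hij
    rw [Matrix.diagonal_apply_eq]
    by_cases hi1 : i = i₁
    · rw [hd]; simp [if_pos hi1]
    · have : d i = (M i i)⁻¹ := by rw [hd]; simp [if_neg hi1]
      rw [this]
      by_cases hMii : M i i = 0
      · rw [hMii]; simp
      · field_simp
  · rw [Matrix.diagonal_apply_ne _ hij]
    by_cases hMij : M i j = 0
    · rw [hMij]; ring
    · have hsp : (i = i₁ ∧ j = i₂) ∨ (i = i₂ ∧ j = i₁) := by
        by_contra hc
        push_neg at hc
        exact hMij (hMoff i j hij (fun h => (hc.1 h.1) h.2) (fun h => (hc.2 h.1) h.2))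
      rcases hsp with ⟨hi, -⟩ | ⟨-, hj⟩
      · have : d i = 0 := by rw [hd]; simp [if_pos hi]
        rw [this]; ring
      · have : d j = 0 := by rw [hd]; simp [if_pos hj]
        rw [this]; ring

lemma claim1 {M : Matrix (Fin n) (Fin n) ℝ} {i₁ i₂ : Fin n} (hne : i₁ ≠ i₂)
    (hMoff : ∀ i j : Fin n, i ≠ j → ¬(i = i₁ ∧ j = i₂) → ¬(i = i₂ ∧ j = i₁) → M i j = 0)
    (hMd : ∀ i : Fin n, i ≠ i₁ → M i i ≠ 0)
    (hkey : M i₁ i₁ * M i₂ i₂ = M i₂ i₁ * M i₁ i₂) :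
    M * Matrix.diagonal (fun i => if i = i₁ then (0:ℝ) else (M i i)⁻¹) * M = M := by
  set d : Fin n → ℝ := fun i => if i = i₁ then (0:ℝ) else (M i i)⁻¹ with hd
  have hd1 : d i₁ = 0 := by rw [hd]; simp
  have hdne : ∀ i, i ≠ i₁ → d i = (M i i)⁻¹ := fun i hi => by rw [hd]; simp [if_neg hi]
  ext i j
  rw [Matrix.mul_apply]
  simp only [Matrix.mul_diagonal]
  set k₀ : Fin n := if i = i₁ then i₂ else i with hk₀
  rw [Finset.sum_eq_single k₀]
  · -- value of the single term
    by_cases hi1 : i = i₁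
    · have hk₀2 : k₀ = i₂ := by rw [hk₀, if_pos hi1]
      rw [hk₀2, hdne i₂ (fun h => hne h.symm)]
      by_cases hj2 : j = i₂
      · rw [hi1, hj2]
        field_simp [hMd i₂ (fun h => hne h.symm)]
      · by_cases hj1 : j = i₁
        · rw [hi1, hj1]
          have hda := hMd i₂ (fun h => hne h.symm)
          field_simp
          linarith [hkey]
        · have hz1 : M i₂ j = 0 := hMoff i₂ j (fun h => hj2 h.symm)
            (fun h => hne h.1.symm) (fun h => hj1 h.2)
          have hz2 : M i j = 0 := by
            rw [hi1]
            exact hMoff i₁ j (fun h => hj1 h.symm) (fun h => hj2 h.2)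
              (fun h => hne h.1)
          rw [hz1, hz2]; ring
    · have hk₀2 : k₀ = i := by rw [hk₀, if_neg hi1]
      rw [hk₀2, hdne i hi1, mul_inv_cancel₀ (hMd i hi1), one_mul]
  · -- other terms vanish
    intro k _ hkne
    by_cases hk1 : k = i₁
    · rw [hk1, hd1]; ring
    · by_cases hMik : M i k = 0
      · rw [hMik]; ring
      · by_cases hik : i = k
        · exfalso
          apply hkne
          rw [hk₀, if_neg (fun hcon : i = i₁ => hk1 (hik ▸ hcon)), hik]
        · have hsp : (i = i₁ ∧ k = i₂) ∨ (i = i₂ ∧ k = i₁) := by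
            by_contra hc
            push_neg at hc
            exact hMik (hMoff i k hik (fun h => (hc.1 h.1) h.2) (fun h => (hc.2 h.1) h.2))
          rcases hsp with ⟨hi, hk2⟩ | ⟨-, hk2⟩
          · exact absurd (by rw [hk₀, if_pos hi, hk2]) hkne
          · exact absurd hk2 hk1
  · intro hcon
    exact absurd (Finset.mem_univ k₀) hcon

end Claims

theorem fsai_one_two_inverse (n : ℕ) (hn : 2 ≤ n)
    (A : Matrix (Fin n) (Fin n) ℝ)
    (hA : IsSingularMMatrix A) (hirr : IsIrreducibleMatrix A)
    (L U : Matrix (Fin n) (Fin n) ℝ)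
    (hL : IsFSAILowerFactor A L
      ({p : Fin n × Fin n | p.2 ≤ p.1} \
        {((⟨n - 1, by omega⟩ : Fin n), (⟨n - 2, by omega⟩ : Fin n))}))
    (hU : IsFSAIUpperFactor A U
      ({p : Fin n × Fin n | p.1 ≤ p.2} \
        {((⟨n - 2, by omega⟩ : Fin n), (⟨n - 1, by omega⟩ : Fin n))}))
    (Dm : Matrix (Fin n) (Fin n) ℝ)
    (hDm : Dm = Matrix.diagonal (fun i : Fin n =>
      if i = (⟨n - 1, by omega⟩ : Fin n) then 0 else ((L * A * U) i i)⁻¹))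
    (Ahat : Matrix (Fin n) (Fin n) ℝ)
    (hAhat : Ahat = U * Dm * L) :
    A * Ahat * A = A ∧ Ahat * A * Ahat = Ahat := by
  have hm : 0 < n := by omega
  set i₁ : Fin n := ⟨n - 1, by omega⟩ with hi₁
  set i₂ : Fin n := ⟨n - 2, by omega⟩ with hi₂
  have h1 : (i₁ : ℕ) = n - 1 := rfl
  have h2 : (i₂ : ℕ) = n - 2 := rfl
  have hne : i₁ ≠ i₂ := by
    intro hcon
    have := congrArg (fun t : Fin n => (t : ℕ)) hcon
    simp only [h1, h2] at this
    omega
  obtain ⟨hLt, hLoffp, hLAp⟩ := hL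
  obtain ⟨hUt, hUoffp, hAUp⟩ := hU
  have hLoff : L i₁ i₂ = 0 := hLoffp (i₁, i₂) (fun hmem => hmem.2 rfl)
  have hUoff : U i₂ i₁ = 0 := hUoffp (i₂, i₁) (fun hmem => hmem.2 rfl)
  have hLA : ∀ i j : Fin n, j ≤ i → ¬(i = i₁ ∧ j = i₂) →
      (L * A) i j = if i = j then (1:ℝ) else 0 := by
    intro i j hji hns
    exact hLAp (i, j) ⟨hji, fun hcon => hns ⟨congrArg Prod.fst hcon, congrArg Prod.snd hcon⟩⟩
  have hAU : ∀ i j : Fin n, i ≤ j → ¬(i = i₂ ∧ j = i₁) →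
      (A * U) i j = if i = j then (1:ℝ) else 0 := by
    intro i j hij hns
    exact hAUp (i, j) ⟨hij, fun hcon => hns ⟨congrArg Prod.fst hcon, congrArg Prod.snd hcon⟩⟩
  obtain ⟨hZ, B, hBnn, hAeq⟩ := hA
  have hirr' : ∀ i j : Fin n, Relation.ReflTransGen
      (fun a b : Fin n => (specRad B • (1 : Matrix (Fin n) (Fin n) ℝ) - B) a b ≠ 0) i j := by
    rw [← hAeq]
    exact hirr
  have hmin : ∀ (k : ℕ) (hk : k < n),
      (A.submatrix (Fin.castLE hk.le) (Fin.castLE hk.le)).det ≠ 0 := by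
    intro k hk
    rw [hAeq]
    exact leading_invertible hk hBnn rfl hirr'
  have hLd : ∀ i : Fin n, L i i ≠ 0 := Ldiag h1 h2 hn hmin hLt hLoff hLA
  have hUd : ∀ i : Fin n, U i i ≠ 0 := Udiag h1 h2 hn hmin hUt hUoff hAU
  have hMoff : ∀ i j : Fin n, i ≠ j → ¬(i = i₁ ∧ j = i₂) → ¬(i = i₂ ∧ j = i₁) →
      (L * A * U) i j = 0 := Mstruct h1 h2 hn hLt hUt hLA hAU
  have hMd : ∀ i : Fin n, i ≠ i₁ → (L * A * U) i i ≠ 0 :=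
    Mdiag_ne h1 h2 hn hmin hLt hUt hLd hUd hMoff
  have hdetL : L.det ≠ 0 := by
    rw [Matrix.det_of_lowerTriangular L (fun a b hab => hLt a b hab)]
    rw [Finset.prod_ne_zero_iff]
    exact fun i _ => hLd i
  have hdetU : U.det ≠ 0 := by
    rw [Matrix.det_of_upperTriangular (fun a b hab => hUt a b hab)]
    rw [Finset.prod_ne_zero_iff]
    exact fun i _ => hUd i
  -- a nonzero null vector of A
  obtain ⟨y, hyne, hAy⟩ : ∃ y : Fin n → ℝ, y ≠ 0 ∧ A *ᵥ y = 0 := by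
    rw [hAeq]
    exact exists_null hm hBnn rfl hirr'
  have hUunit : IsUnit U.det := isUnit_iff_ne_zero.mpr hdetU
  have hUU : U * U⁻¹ = 1 := Matrix.mul_nonsing_inv U hUunit
  set w : Fin n → ℝ := U⁻¹ *ᵥ y with hw
  have hMw : (L * A * U) *ᵥ w = 0 := by
    rw [hw, Matrix.mulVec_mulVec]
    have e : L * A * U * U⁻¹ = L * A := by
      rw [mul_assoc (L * A) U U⁻¹, hUU, mul_one]
    rw [e, ← Matrix.mulVec_mulVec, hAy, Matrix.mulVec_zero]
  have hwne : w ≠ 0 := by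
    intro hw0
    apply hyne
    have : y = U *ᵥ w := by
      rw [hw, Matrix.mulVec_mulVec, hUU, Matrix.one_mulVec]
    rw [this, hw0, Matrix.mulVec_zero]
  have hw0 : ∀ i : Fin n, i ≠ i₁ → i ≠ i₂ → w i = 0 := by
    intro i hni1 hni2
    have h := congrFun hMw i
    have hsum : ((L * A * U) *ᵥ w) i = (L * A * U) i i * w i := by
      rw [Matrix.mulVec, dotProduct]
      apply Finset.sum_eq_single_of_mem i (Finset.mem_univ i)
      intro j _ hji
      rw [hMoff i j (Ne.symm hji) (fun hc => hni1 hc.1) (fun hc => hni2 hc.1), zero_mul]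
    rw [hsum] at h
    exact (mul_eq_zero.mp h).resolve_left (hMd i hni1)
  have hrow : ∀ i : Fin n, i = i₁ ∨ i = i₂ →
      ((L * A * U) *ᵥ w) i = (L * A * U) i i₂ * w i₂ + (L * A * U) i i₁ * w i₁ := by
    intro i hi
    rw [Matrix.mulVec, dotProduct]
    rw [show (Finset.univ : Finset (Fin n)) = Finset.univ from rfl]
    rw [← Finset.sum_subset (Finset.subset_univ ({i₂, i₁} : Finset (Fin n)))
      (fun j _ hj => ?_)]
    · rw [Finset.sum_pair (Ne.symm hne)]
    · simp only [Finset.mem_insert, Finset.mem_singleton] at hj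
      push_neg at hj
      have hij : i ≠ j := by
        rcases hi with rfl | rfl
        · exact fun hcon => hj.2 hcon.symm
        · exact fun hcon => hj.1 hcon.symm
      rw [hMoff i j hij (fun hc => hj.1 hc.2) (fun hc => hj.2 hc.2), zero_mul]
  have heq1 : (L * A * U) i₂ i₂ * w i₂ + (L * A * U) i₂ i₁ * w i₁ = 0 := by
    rw [← hrow i₂ (Or.inr rfl)]
    exact congrFun hMw i₂
  have heq2 : (L * A * U) i₁ i₂ * w i₂ + (L * A * U) i₁ i₁ * w i₁ = 0 := by
    rw [← hrow i₁ (Or.inl rfl)]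
    exact congrFun hMw i₁
  have hda : (L * A * U) i₂ i₂ ≠ 0 := hMd i₂ (fun h => hne h.symm)
  have hw1ne : w i₁ ≠ 0 := by
    intro hw1
    have hw2 : w i₂ = 0 := by
      rw [hw1, mul_zero, add_zero] at heq1
      exact (mul_eq_zero.mp heq1).resolve_left hda
    apply hwne
    funext i
    by_cases hi1 : i = i₁
    · rw [hi1]; exact hw1
    · by_cases hi2 : i = i₂
      · rw [hi2]; exact hw2
      · exact hw0 i hi1 hi2
  have hkey : (L * A * U) i₁ i₁ * (L * A * U) i₂ i₂
      = (L * A * U) i₂ i₁ * (L * A * U) i₁ i₂ := by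
    have h3 : ((L * A * U) i₁ i₁ * (L * A * U) i₂ i₂
        - (L * A * U) i₂ i₁ * (L * A * U) i₁ i₂) * w i₁ = 0 := by
      linear_combination (L * A * U) i₂ i₂ * heq2 - (L * A * U) i₁ i₂ * heq1
    have := (mul_eq_zero.mp h3).resolve_right hw1ne
    linarith
  -- the two matrix identities
  have hMDM : (L * A * U) * Dm * (L * A * U) = L * A * U := by
    rw [hDm]
    exact claim1 hne hMoff hMd hkey
  have hDMD : Dm * (L * A * U) * Dm = Dm := by
    rw [hDm]
    exact claim2 hMoff
  have hLunit : IsUnit L.det := isUnit_iff_ne_zero.mpr hdetL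
  have hLinv : L⁻¹ * L = 1 := Matrix.nonsing_inv_mul L hLunit
  constructor
  · have e2 : L * (A * Ahat * A) * U = (L * A * U) * Dm * (L * A * U) := by
      rw [hAhat]
      simp only [mul_assoc]
    rw [hMDM] at e2
    calc A * Ahat * A = 1 * (A * Ahat * A) * 1 := by rw [one_mul, mul_one]
      _ = (L⁻¹ * L) * (A * Ahat * A) * (U * U⁻¹) := by rw [hLinv, hUU]
      _ = L⁻¹ * (L * (A * Ahat * A) * U) * U⁻¹ := by simp only [mul_assoc]
      _ = L⁻¹ * (L * A * U) * U⁻¹ := by rw [e2]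
      _ = (L⁻¹ * L) * (A * (U * U⁻¹)) := by simp only [mul_assoc]
      _ = A := by rw [hLinv, hUU, one_mul, mul_one]
  · have e1 : Ahat * A * Ahat = U * (Dm * (L * A * U) * Dm) * L := by
      rw [hAhat]
      simp only [mul_assoc]
    rw [e1, hDMD, ← hAhat]
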